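/- Let T be a positively edge-weighted tree with square root embedding Ψ, and let L_1, L_2 be disjoint subsets of vertices such that the minimal spanning subtrees of L_1 and L_2 in T share an edge. Then there exist v_1, v_2 ∈ L_1 and w_1, w_2 ∈ L_2 with (Ψ(v_1) - Ψ(w_1)) · (Ψ(v_2) - Ψ(w_2)) < 0, i.e., some pair of cross vectors forms an obtuse angle. -/

import Mathlib

open SimpleGraph

/-- The unique path between two vertices of a tree, as a walk. -/
noncomputable def treePath {V : Type*} (G : SimpleGraph V) (hG : G.IsTree) (a b : V) :
    G.Walk a b :=
  (hG.existsUnique_path a b).choose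

/-- The square root embedding with base node `v`: the coordinate of `Ψ_v u` at edge `e`
is `√(w e)` if `e` lies on the path from `v` to `u`, and `0` otherwise. -/
noncomputable def sqrtEmbed {V : Type*} [DecidableEq V] (G : SimpleGraph V) (hG : G.IsTree)
    [Fintype G.edgeSet] (w : Sym2 V → ℝ) (v u : V) : EuclideanSpace ℝ G.edgeSet :=
  WithLp.toLp 2 (fun e => if (e : Sym2 V) ∈ (treePath G hG v u).edges then Real.sqrt (w e) else 0)

/-- The tree metric: sum of the weights of the edges on the unique path. -/
noncomputable def treeDist {V : Type*} (G : SimpleGraph V) (hG : G.IsTree)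
    (w : Sym2 V → ℝ) (a b : V) : ℝ :=
  ((treePath G hG a b).edges.map w).sum

section Aux

set_option linter.unusedSectionVars false

variable {V : Type*} [DecidableEq V] {G : SimpleGraph V}

lemma treePath_isPath (hG : G.IsTree) (a b : V) : (treePath G hG a b).IsPath :=
  (hG.existsUnique_path a b).choose_spec.1

/-- Side function transport: a walk avoiding `e` keeps reachability in `G - e`. -/
lemma reach_of_walk_avoid {e : Sym2 V} {a b : V} (p : G.Walk a b) (hp : e ∉ p.edges) :
    (G \ fromEdgeSet {e}).Reachable a b := by
  induction p with
  | nil => exact Reachable.refl _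
  | cons h q ih =>
    rename_i u u' c
    simp only [Walk.edges_cons, List.mem_cons] at hp
    push_neg at hp
    have h1 : (G \ fromEdgeSet {e}).Adj u u' := by
      simp only [sdiff_adj, fromEdgeSet_adj, Set.mem_singleton_iff]
      exact ⟨h, fun hc => hp.1 hc.1.symm⟩
    exact h1.reachable.trans (ih hp.2)

/-- Key lemma: an edge of the tree lies on a path iff its endpoints are separated in `G - e`. -/
lemma mem_edges_iff_not_reach (hG : G.IsTree) {e : Sym2 V} (he : e ∈ G.edgeSet) {a b : V}
    (p : G.Walk a b) (hp : p.IsPath) :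
    e ∈ p.edges ↔ ¬ (G \ fromEdgeSet {e}).Reachable a b := by
  have hb : G.IsBridge e := (isAcyclic_iff_forall_edge_isBridge.mp hG.2) he
  induction p with
  | nil =>
    simp only [Walk.edges_nil, List.not_mem_nil, false_iff, not_not]
    exact Reachable.refl _
  | cons h q ih =>
    rename_i u u' c
    have hq : q.IsPath := hp.of_cons
    by_cases hc : e = s(u, u')
    · subst hc
      have hnq : s(u, u') ∉ q.edges := by
        have := hp.isTrail.edges_nodup
        simp only [Walk.edges_cons, List.nodup_cons] at this
        exact this.1
      have hr : (G \ fromEdgeSet {s(u, u')}).Reachable u' c := by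
        by_contra hcon
        exact hnq ((ih hq).mpr hcon)
      simp only [Walk.edges_cons, List.mem_cons, true_or, true_iff]
      intro hrc
      have h2 : (G \ fromEdgeSet {s(u, u')}).Reachable u u' := hrc.trans hr.symm
      exact (SimpleGraph.isBridge_iff.mp hb) h2
    · have h1 : (G \ fromEdgeSet {e}).Adj u u' := by
        simp only [sdiff_adj, fromEdgeSet_adj, Set.mem_singleton_iff]
        exact ⟨h, fun hc' => hc hc'.1.symm⟩
      simp only [Walk.edges_cons, List.mem_cons, hc, false_or]
      exact (ih hq).trans ⟨fun hn hr => hn (h1.reachable.symm.trans hr),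
        fun hn hr => hn (h1.reachable.trans hr)⟩

/-- Two sides: any vertex is reachable from one endpoint of the removed edge. -/
lemma reach_endpoint (hG : G.IsTree) {x y : V} (a : V) :
    (G \ fromEdgeSet {s(x, y)}).Reachable x a ∨ (G \ fromEdgeSet {s(x, y)}).Reachable y a := by
  obtain ⟨p⟩ := hG.1.preconnected x a
  set e := s(x, y) with hedef
  have main : ∀ (c d : V) (q : G.Walk c d),
      ((G \ fromEdgeSet {e}).Reachable x c ∨ (G \ fromEdgeSet {e}).Reachable y c) →
      ((G \ fromEdgeSet {e}).Reachable x d ∨ (G \ fromEdgeSet {e}).Reachable y d) := by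
    intro c d q
    induction q with
    | nil => exact id
    | cons h q ih =>
      rename_i u u' dd
      intro hu
      by_cases hc : e = s(u, u')
      · rw [hedef] at hc
        rcases Sym2.eq_iff.mp hc with ⟨rfl, rfl⟩ | ⟨rfl, rfl⟩
        · exact ih (Or.inr (Reachable.refl _))
        · exact ih (Or.inl (Reachable.refl _))
      · have h1 : (G \ fromEdgeSet {e}).Adj u u' := by
          simp only [sdiff_adj, fromEdgeSet_adj, Set.mem_singleton_iff]
          exact ⟨h, fun hc' => hc hc'.1.symm⟩
        exact ih (hu.imp (fun hr => hr.trans h1.reachable) (fun hr => hr.trans h1.reachable))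
  exact main x a p (Or.inl (Reachable.refl _))

/-- If `a,b` are on opposite sides and `b,c` are on opposite sides, then `a,c` are on the
same side. -/
lemma reach_of_not_not (hG : G.IsTree) {e : Sym2 V} {a b c : V}
    (h1 : ¬ (G \ fromEdgeSet {e}).Reachable a b) (h2 : ¬ (G \ fromEdgeSet {e}).Reachable b c) :
    (G \ fromEdgeSet {e}).Reachable a c := by
  induction e using Sym2.ind with
  | _ x y =>
    rcases reach_endpoint hG (x := x) (y := y) a with ha | ha <;>
      rcases reach_endpoint hG (x := x) (y := y) b with hb | hb <;>
      rcases reach_endpoint hG (x := x) (y := y) c with hc | hc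
    all_goals first
      | exact ha.symm.trans hc
      | exact absurd (ha.symm.trans hb) h1
      | exact absurd (hb.symm.trans hc) h2

/-- Membership in edges of the canonical tree path, restated. -/
lemma treePath_mem_iff (hG : G.IsTree) {e : Sym2 V} (he : e ∈ G.edgeSet) (a b : V) :
    e ∈ (treePath G hG a b).edges ↔ ¬ (G \ fromEdgeSet {e}).Reachable a b :=
  mem_edges_iff_not_reach hG he _ (treePath_isPath hG a b)

/-- If `u` is on the tree path from `a` to `b` and that path avoids `e`, then `a` and `u`
are on the same side of `e`. -/
lemma reach_of_mem_support (hG : G.IsTree) {e : Sym2 V} {a b u : V}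
    (hu : u ∈ (treePath G hG a b).support) (hne : e ∉ (treePath G hG a b).edges) :
    (G \ fromEdgeSet {e}).Reachable a u := by
  have h := Walk.edges_takeUntil_subset (treePath G hG a b) hu
  exact reach_of_walk_avoid ((treePath G hG a b).takeUntil u hu) (fun hc => hne (h hc))

end Aux

section Core

open RealInnerProductSpace

variable {V : Type*} [DecidableEq V] {G : SimpleGraph V}

lemma core_obtuse (hG : G.IsTree) [Fintype G.edgeSet] (w : Sym2 V → ℝ)
    (hw : ∀ e ∈ G.edgeSet, 0 < w e) (v v₁ v₂ w₁ w₂ : V) (e₀ : Sym2 V)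
    (h1 : e₀ ∈ (treePath G hG v₁ v₂).edges) (h2 : e₀ ∈ (treePath G hG w₁ w₂).edges)
    (h3 : e₀ ∉ (treePath G hG v₁ w₁).edges) :
    ⟪sqrtEmbed G hG w v v₁ - sqrtEmbed G hG w v w₂,
      sqrtEmbed G hG w v v₂ - sqrtEmbed G hG w v w₁⟫ < 0 := by
  classical
  have he₀ : e₀ ∈ G.edgeSet := (treePath G hG v₁ v₂).edges_subset_edgeSet h1
  have key : ∀ e : G.edgeSet,
      ((if (e : Sym2 V) ∈ (treePath G hG v v₁).edges then Real.sqrt (w e) else 0) -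
        (if (e : Sym2 V) ∈ (treePath G hG v w₂).edges then Real.sqrt (w e) else 0)) *
      ((if (e : Sym2 V) ∈ (treePath G hG v v₂).edges then Real.sqrt (w e) else 0) -
        (if (e : Sym2 V) ∈ (treePath G hG v w₁).edges then Real.sqrt (w e) else 0)) ≤ 0 := by
    rintro ⟨e, he⟩
    simp only
    by_cases hP : e ∈ (treePath G hG v v₁).edges <;>
      by_cases hQ : e ∈ (treePath G hG v w₂).edges <;>
      by_cases hP' : e ∈ (treePath G hG v v₂).edges <;>
      by_cases hQ' : e ∈ (treePath G hG v w₁).edges <;>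
      simp only [hP, hQ, hP', hQ', if_true, if_false, ite_true, ite_false, sub_self, zero_mul,
        mul_zero, le_refl, sub_zero, zero_sub]
    all_goals try nlinarith [Real.sqrt_nonneg (w e)]
    -- bad case 1 : hP, ¬hQ, hP', ¬hQ'
    · exfalso
      rw [treePath_mem_iff hG he] at hP hQ hP' hQ'
      push_neg at hQ hQ'
      have hv12 : (G \ fromEdgeSet {e}).Reachable v₁ v₂ :=
        reach_of_not_not hG (fun hr => hP hr.symm) hP'
      have hw12 : (G \ fromEdgeSet {e}).Reachable w₁ w₂ := hQ'.symm.trans hQ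
      have hvw : ¬ (G \ fromEdgeSet {e}).Reachable v₁ w₁ := fun hr => hP (hQ'.trans hr.symm)
      induction e₀ using Sym2.ind with
      | _ x₀ y₀ =>
        have hx₀v : x₀ ∈ (treePath G hG v₁ v₂).support :=
          Walk.fst_mem_support_of_mem_edges _ h1
        have hx₀w : x₀ ∈ (treePath G hG w₁ w₂).support :=
          Walk.fst_mem_support_of_mem_edges _ h2
        have hev : e ∉ (treePath G hG v₁ v₂).edges := by
          rw [treePath_mem_iff hG he]; exact fun hn => hn hv12
        have hew : e ∉ (treePath G hG w₁ w₂).edges := by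
          rw [treePath_mem_iff hG he]; exact fun hn => hn hw12
        exact hvw ((reach_of_mem_support hG hx₀v hev).trans
          (reach_of_mem_support hG hx₀w hew).symm)
    -- bad case 2 : ¬hP, hQ, ¬hP', hQ'
    · exfalso
      rw [treePath_mem_iff hG he] at hP hQ hP' hQ'
      push_neg at hP hP'
      have hv12 : (G \ fromEdgeSet {e}).Reachable v₁ v₂ := hP.symm.trans hP'
      have hw12 : (G \ fromEdgeSet {e}).Reachable w₁ w₂ :=
        reach_of_not_not hG (fun hr => hQ' hr.symm) hQ
      have hvw : ¬ (G \ fromEdgeSet {e}).Reachable v₁ w₁ := fun hr => hQ' (hP.trans hr)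
      induction e₀ using Sym2.ind with
      | _ x₀ y₀ =>
        have hx₀v : x₀ ∈ (treePath G hG v₁ v₂).support :=
          Walk.fst_mem_support_of_mem_edges _ h1
        have hx₀w : x₀ ∈ (treePath G hG w₁ w₂).support :=
          Walk.fst_mem_support_of_mem_edges _ h2
        have hev : e ∉ (treePath G hG v₁ v₂).edges := by
          rw [treePath_mem_iff hG he]; exact fun hn => hn hv12
        have hew : e ∉ (treePath G hG w₁ w₂).edges := by
          rw [treePath_mem_iff hG he]; exact fun hn => hn hw12
        exact hvw ((reach_of_mem_support hG hx₀v hev).trans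
          (reach_of_mem_support hG hx₀w hew).symm)
  -- strict negativity at e₀
  have key₀ :
      ((if (e₀ : Sym2 V) ∈ (treePath G hG v v₁).edges then Real.sqrt (w e₀) else 0) -
        (if (e₀ : Sym2 V) ∈ (treePath G hG v w₂).edges then Real.sqrt (w e₀) else 0)) *
      ((if (e₀ : Sym2 V) ∈ (treePath G hG v v₂).edges then Real.sqrt (w e₀) else 0) -
        (if (e₀ : Sym2 V) ∈ (treePath G hG v w₁).edges then Real.sqrt (w e₀) else 0)) < 0 := by
    rw [treePath_mem_iff hG he₀] at h1 h2 h3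
    push_neg at h3
    have hr₀ : 0 < Real.sqrt (w e₀) := Real.sqrt_pos.mpr (hw e₀ he₀)
    by_cases hRv : (G \ fromEdgeSet {e₀}).Reachable v v₁
    · have hP : e₀ ∉ (treePath G hG v v₁).edges := by
        rw [treePath_mem_iff hG he₀]; exact fun hn => hn hRv
      have hQ' : e₀ ∉ (treePath G hG v w₁).edges := by
        rw [treePath_mem_iff hG he₀]; exact fun hn => hn (hRv.trans h3)
      have hP' : e₀ ∈ (treePath G hG v v₂).edges := by
        rw [treePath_mem_iff hG he₀]; exact fun hn => h1 (hRv.symm.trans hn)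
      have hQ : e₀ ∈ (treePath G hG v w₂).edges := by
        rw [treePath_mem_iff hG he₀]; exact fun hn => h2 ((hRv.trans h3).symm.trans hn)
      rw [if_neg hP, if_pos hQ, if_pos hP', if_neg hQ']
      nlinarith
    · have hP : e₀ ∈ (treePath G hG v v₁).edges := by
        rw [treePath_mem_iff hG he₀]; exact hRv
      have hQ' : e₀ ∈ (treePath G hG v w₁).edges := by
        rw [treePath_mem_iff hG he₀]; exact fun hn => hRv (hn.trans h3.symm)
      have hP' : e₀ ∉ (treePath G hG v v₂).edges := by
        rw [treePath_mem_iff hG he₀]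
        exact fun hn => hn (reach_of_not_not hG hRv h1)
      have hQ : e₀ ∉ (treePath G hG v w₂).edges := by
        rw [treePath_mem_iff hG he₀]
        intro hn
        exact hn (reach_of_not_not hG (fun hr => hRv (hr.trans h3.symm)) h2)
      rw [if_pos hP, if_neg hQ, if_neg hP', if_pos hQ']
      nlinarith
  -- assemble
  have hsum : ⟪sqrtEmbed G hG w v v₁ - sqrtEmbed G hG w v w₂,
      sqrtEmbed G hG w v v₂ - sqrtEmbed G hG w v w₁⟫ =
      ∑ e : G.edgeSet,
      ((if (e : Sym2 V) ∈ (treePath G hG v v₁).edges then Real.sqrt (w e) else 0) -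
        (if (e : Sym2 V) ∈ (treePath G hG v w₂).edges then Real.sqrt (w e) else 0)) *
      ((if (e : Sym2 V) ∈ (treePath G hG v v₂).edges then Real.sqrt (w e) else 0) -
        (if (e : Sym2 V) ∈ (treePath G hG v w₁).edges then Real.sqrt (w e) else 0)) := by
    rw [PiLp.inner_apply]
    refine Finset.sum_congr rfl fun e _ => ?_
    simp [sqrtEmbed, RCLike.inner_apply]
    ring
  rw [hsum]
  refine lt_of_lt_of_eq
    (Finset.sum_lt_sum (fun i _ => key i) ⟨⟨e₀, he₀⟩, Finset.mem_univ _, key₀⟩) (by simp)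

end Core

open RealInnerProductSpace in
/-- if the minimal spanning subtrees of the disjoint vertex sets `L₁` and `L₂`
share an edge (i.e., some path within `L₁` shares an edge with some path within `L₂`), then
some pair of cross vectors between the embedded sets forms an obtuse angle. -/
theorem sqrtEmbed_obtuse_of_shared_edge {V : Type*} [DecidableEq V] (G : SimpleGraph V)
    (hG : G.IsTree) [Fintype G.edgeSet] (w : Sym2 V → ℝ) (hw : ∀ e ∈ G.edgeSet, 0 < w e)
    (v : V) (L₁ L₂ : Set V) (hdisj : Disjoint L₁ L₂)
    (h : ∃ v₁ ∈ L₁, ∃ v₂ ∈ L₁, ∃ w₁ ∈ L₂, ∃ w₂ ∈ L₂, ∃ e : Sym2 V,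
      e ∈ (treePath G hG v₁ v₂).edges ∧ e ∈ (treePath G hG w₁ w₂).edges) :
    ∃ v₁ ∈ L₁, ∃ v₂ ∈ L₁, ∃ w₁ ∈ L₂, ∃ w₂ ∈ L₂,
      ⟪sqrtEmbed G hG w v v₁ - sqrtEmbed G hG w v w₁,
        sqrtEmbed G hG w v v₂ - sqrtEmbed G hG w v w₂⟫ < 0 := by
  obtain ⟨v₁, hv₁, v₂, hv₂, w₁, hw₁, w₂, hw₂, e₀, h1, h2⟩ := h
  have he₀ : e₀ ∈ G.edgeSet := (treePath G hG v₁ v₂).edges_subset_edgeSet h1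
  by_cases hc : e₀ ∈ (treePath G hG v₁ w₁).edges
  · -- use (v₁, w₁) roles swapped: w₂ and w₁
    have h2' : e₀ ∈ (treePath G hG w₂ w₁).edges := by
      rw [treePath_mem_iff hG he₀] at h2 ⊢
      exact fun hr => h2 hr.symm
    have h3' : e₀ ∉ (treePath G hG v₁ w₂).edges := by
      rw [treePath_mem_iff hG he₀] at hc h2 ⊢
      exact fun hn => hn (reach_of_not_not hG hc h2)
    exact ⟨v₁, hv₁, v₂, hv₂, w₁, hw₁, w₂, hw₂,
      core_obtuse hG w hw v v₁ v₂ w₂ w₁ e₀ h1 h2' h3'⟩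
  · exact ⟨v₁, hv₁, v₂, hv₂, w₂, hw₂, w₁, hw₁,
      core_obtuse hG w hw v v₁ v₂ w₁ w₂ e₀ h1 h2 hc⟩
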